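/- (Schottky's ping-pong in the hyperboloid model.) Let B be the Lorentzian bilinear form on ℝ³ and H = {v ∈ ℝ³ : B(v,v) = −1, v₃ > 0} the hyperboloid model of the hyperbolic plane. For a spacelike vector w (i.e. B(w,w) > 0), let H̄_w = {v ∈ H : B(v,w) ≥ 0}. Let A₁, A₂ ∈ GL(3,ℝ) preserve B and map H to itself, and let w₁, w₂ be spacelike vectors. If the four sets H̄_{−w₁}, H̄_{A₁w₁}, H̄_{−w₂}, H̄_{A₂w₂} are pairwise disjoint, then the homomorphism from the free group on two generators to GL(3,ℝ) sending the generators to A₁ and A₂ is injective (so A₁ and A₂ generate a free group of rank 2), and the subgroup generated by A₁ and A₂ is a discrete subgroup of GL(3,ℝ). -/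

import Mathlib

noncomputable section

/-- The Lorentzian bilinear form on `ℝ³`. -/
def B3 (v w : Fin 3 → ℝ) : ℝ := v 0 * w 0 + v 1 * w 1 - v 2 * w 2

/-- The upper sheet of the hyperboloid `B(v,v) = -1`, model of the hyperbolic plane. -/
def UpperHyperboloid : Set (Fin 3 → ℝ) := {v | B3 v v = -1 ∧ 0 < v 2}

/-- The closed half-plane of the hyperboloid model determined by a spacelike vector `w`. -/
def closedHalfPlane (w : Fin 3 → ℝ) : Set (Fin 3 → ℝ) :=
  {v ∈ UpperHyperboloid | 0 ≤ B3 v w}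

namespace SchottkyAux

lemma b3_neg_right (v w : Fin 3 → ℝ) : B3 v (-w) = -(B3 v w) := by
  simp only [B3, Pi.neg_apply]; ring

lemma b3_neg_both (w : Fin 3 → ℝ) : B3 (-w) (-w) = B3 w w := by
  simp only [B3, Pi.neg_apply]; ring

lemma b3_cont (w : Fin 3 → ℝ) : Continuous fun v => B3 v w := by
  unfold B3; fun_prop

lemma b3_cont2 : Continuous fun v : Fin 3 → ℝ => B3 v v := by
  unfold B3; fun_prop

lemma chp_subset (w : Fin 3 → ℝ) : closedHalfPlane w ⊆ UpperHyperboloid :=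
  fun _ hv => hv.1

lemma isClosed_chp (w : Fin 3 → ℝ) : IsClosed (closedHalfPlane w) := by
  have : closedHalfPlane w =
      {v | B3 v v = -1} ∩ {v | 1 ≤ v 2} ∩ {v | 0 ≤ B3 v w} := by
    ext v
    simp only [closedHalfPlane, UpperHyperboloid, Set.mem_setOf_eq, Set.mem_inter_iff,
      Set.sep_setOf]
    constructor
    · rintro ⟨⟨h1, h2⟩, h3⟩
      refine ⟨⟨h1, ?_⟩, h3⟩
      simp only [B3] at h1; nlinarith
    · rintro ⟨⟨h1, h2⟩, h3⟩
      exact ⟨⟨h1, by linarith⟩, h3⟩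
  rw [this]
  exact ((isClosed_eq b3_cont2 continuous_const).inter
    (isClosed_le continuous_const (continuous_apply 2))).inter
    (isClosed_le continuous_const (b3_cont w))

lemma mem_H (a b : ℝ) : (![a, b, Real.sqrt (1 + a^2 + b^2)]) ∈ UpperHyperboloid := by
  have hpos : (0:ℝ) < 1 + a^2 + b^2 := by positivity
  have hs : Real.sqrt (1 + a^2 + b^2) ^ 2 = 1 + a^2 + b^2 := Real.sq_sqrt hpos.le
  constructor
  · show B3 _ _ = -1
    simp only [B3, Matrix.cons_val_zero, Matrix.cons_val_one, Matrix.head_cons,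
      Matrix.cons_val_two, Matrix.tail_cons]
    nlinarith
  · show (0:ℝ) < _
    simp only [Matrix.cons_val_two, Matrix.tail_cons, Matrix.head_cons]
    exact Real.sqrt_pos.2 hpos

lemma H_preconnected : IsPreconnected UpperHyperboloid := by
  have hrange : UpperHyperboloid =
      Set.range (fun p : ℝ × ℝ => ![p.1, p.2, Real.sqrt (1 + p.1^2 + p.2^2)]) := by
    ext v
    constructor
    · rintro ⟨h1, h2⟩
      refine ⟨(v 0, v 1), ?_⟩
      have hv2 : Real.sqrt (1 + (v 0)^2 + (v 1)^2) = v 2 := by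
        rw [show 1 + (v 0)^2 + (v 1)^2 = (v 2)^2 by simp only [B3] at h1; nlinarith]
        exact Real.sqrt_sq h2.le
      funext i
      fin_cases i <;> simp [hv2]
    · rintro ⟨p, rfl⟩
      exact mem_H p.1 p.2
  rw [hrange]
  apply isPreconnected_range
  apply continuous_pi
  intro i
  fin_cases i <;> simp <;> fun_prop

lemma chp_nonempty (w : Fin 3 → ℝ) (hw : 0 < B3 w w) : (closedHalfPlane w).Nonempty := by
  set d := B3 w w with hd
  set R := w 0 ^ 2 + w 1 ^ 2 with hRdef
  have hdR : d = R - w 2 ^ 2 := by rw [hd]; simp only [B3, hRdef]; ring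
  have hRd : 0 ≤ R - d := by rw [hdR]; nlinarith [sq_nonneg (w 2)]
  set t := |w 2| / d with ht
  have htnn : 0 ≤ t := div_nonneg (abs_nonneg _) hw.le
  set a := w 0 * t with ha
  set b := w 1 * t with hb
  refine ⟨![a, b, Real.sqrt (1 + a^2 + b^2)], mem_H a b, ?_⟩
  set s := Real.sqrt (1 + a^2 + b^2) with hs
  have hpos : (0:ℝ) < 1 + a^2 + b^2 := by positivity
  have hs2 : s ^ 2 = 1 + a^2 + b^2 := Real.sq_sqrt hpos.le
  have hab : a^2 + b^2 = t^2 * R := by rw [ha, hb, hRdef]; ring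
  have hs2' : s ^ 2 = 1 + t^2 * R := by rw [hs2]; linarith [hab]
  have hsnn : 0 < s := Real.sqrt_pos.2 hpos
  show 0 ≤ B3 _ w
  simp only [B3, Matrix.cons_val_zero, Matrix.cons_val_one, Matrix.head_cons,
    Matrix.cons_val_two, Matrix.tail_cons, ← hs]
  have habw : a * w 0 + b * w 1 = t * R := by rw [ha, hb, hRdef]; ring
  rw [habw]
  rcases le_or_gt (w 2) 0 with h2 | h2
  · have h1 : 0 ≤ t * R := by positivity
    nlinarith [mul_nonneg hsnn.le (neg_nonneg.2 h2)]
  · have ht' : t = w 2 / d := by rw [ht, abs_of_pos h2]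
    have htd : t * d = w 2 := by rw [ht']; field_simp
    have key2 : w 2 ^ 2 ≤ t^2 * R * d := by
      have e1 : w 2 ^ 2 = t^2 * d^2 := by rw [← htd]; ring
      nlinarith [mul_nonneg (mul_nonneg (sq_nonneg t) hw.le) hRd]
    have key : (s * w 2)^2 ≤ (t * R)^2 := by nlinarith [key2, hdR]
    have hlhs : 0 ≤ t * R := by positivity
    nlinarith [mul_pos hsnn h2]

lemma inv_preserves_H (A : GL (Fin 3) ℝ)
    (hB : ∀ v w : Fin 3 → ℝ, B3 ((A : Matrix (Fin 3) (Fin 3) ℝ).mulVec v)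
      ((A : Matrix (Fin 3) (Fin 3) ℝ).mulVec w) = B3 v w)
    (hH : ∀ v ∈ UpperHyperboloid, (A : Matrix (Fin 3) (Fin 3) ℝ).mulVec v ∈ UpperHyperboloid)
    (y : Fin 3 → ℝ) (hy : y ∈ UpperHyperboloid) :
    ((A⁻¹ : GL (Fin 3) ℝ) : Matrix (Fin 3) (Fin 3) ℝ).mulVec y ∈ UpperHyperboloid := by
  set u := ((A⁻¹ : GL (Fin 3) ℝ) : Matrix (Fin 3) (Fin 3) ℝ).mulVec y with hu
  have hAu : (A : Matrix (Fin 3) (Fin 3) ℝ).mulVec u = y := by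
    rw [hu, Matrix.mulVec_mulVec]
    rw [show (A : Matrix (Fin 3) (Fin 3) ℝ) * ((A⁻¹ : GL (Fin 3) ℝ) : Matrix (Fin 3) (Fin 3) ℝ)
        = 1 by rw [← Units.val_mul, mul_inv_cancel, Units.val_one]]
    rw [Matrix.one_mulVec]
  have huu : B3 u u = -1 := by rw [← hB u u, hAu]; exact hy.1
  have hneg : B3 (-u) (-u) = -1 := by rw [b3_neg_both]; exact huu
  rcases lt_trichotomy (u 2) 0 with h | h | h
  · exfalso
    have hmem : (-u) ∈ UpperHyperboloid := ⟨hneg, by simpa using h⟩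
    have h4 := hH _ hmem
    rw [Matrix.mulVec_neg, hAu] at h4
    have h3 := h4.2
    simp only [Pi.neg_apply] at h3
    linarith [hy.2]
  · exfalso
    simp only [B3, h] at huu
    nlinarith [sq_nonneg (u 0), sq_nonneg (u 1)]
  · exact ⟨huu, h⟩

/-- A "reduced" predicate on words -/
def Rd (L : List (Fin 2 × Bool)) : Prop :=
  ∀ (L₂ L₃ : List (Fin 2 × Bool)) (x : Fin 2) (b : Bool),
    L ≠ L₂ ++ (x, b) :: (x, !b) :: L₃

lemma rd_toWord (g : FreeGroup (Fin 2)) : Rd g.toWord := by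
  intro L₂ L₃ x b h
  exact FreeGroup.reduce.not (L₁ := g.toWord) (x := x) (b := b)
    (by rw [FreeGroup.reduce_toWord]; exact h)

lemma rd_tail {p : Fin 2 × Bool} {L : List (Fin 2 × Bool)} (h : Rd (p :: L)) : Rd L :=
  fun L₂ L₃ x b hL => h (p :: L₂) L₃ x b (by rw [hL]; rfl)

lemma rd_head {p q : Fin 2 × Bool} {L : List (Fin 2 × Bool)} (h : Rd (p :: q :: L)) :
    ¬(p.1 = q.1 ∧ q.2 = !p.2) := by
  rintro ⟨h1, h2⟩
  have hq : q = (p.1, !p.2) := Prod.ext h1.symm h2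
  exact h [] L p.1 p.2 (by rw [hq]; rfl)

lemma gl_inv_apply (A : GL (Fin 3) ℝ) (y : Fin 3 → ℝ) :
    (A : Matrix (Fin 3) (Fin 3) ℝ).mulVec
      (((A⁻¹ : GL (Fin 3) ℝ) : Matrix (Fin 3) (Fin 3) ℝ).mulVec y) = y := by
  rw [Matrix.mulVec_mulVec]
  rw [show (A : Matrix (Fin 3) (Fin 3) ℝ) * ((A⁻¹ : GL (Fin 3) ℝ) : Matrix (Fin 3) (Fin 3) ℝ)
      = 1 by rw [← Units.val_mul, mul_inv_cancel, Units.val_one]]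
  rw [Matrix.one_mulVec]

end SchottkyAux

open SchottkyAux

/-- (Schottky ping-pong in the hyperboloid model.) If `A₁, A₂` preserve the Lorentzian form
and the upper hyperboloid, and the four half-planes `H̄_{−w₁}, H̄_{A₁w₁}, H̄_{−w₂}, H̄_{A₂w₂}`
are pairwise disjoint, then `A₁, A₂` generate a free discrete subgroup of `GL(3,ℝ)`. -/
theorem schottky_ping_pong
    (A₁ A₂ : GL (Fin 3) ℝ)
    (hB₁ : ∀ v w : Fin 3 → ℝ,
      B3 ((A₁ : Matrix (Fin 3) (Fin 3) ℝ).mulVec v) ((A₁ : Matrix (Fin 3) (Fin 3) ℝ).mulVec w)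
        = B3 v w)
    (hB₂ : ∀ v w : Fin 3 → ℝ,
      B3 ((A₂ : Matrix (Fin 3) (Fin 3) ℝ).mulVec v) ((A₂ : Matrix (Fin 3) (Fin 3) ℝ).mulVec w)
        = B3 v w)
    (hH₁ : ∀ v ∈ UpperHyperboloid, (A₁ : Matrix (Fin 3) (Fin 3) ℝ).mulVec v ∈ UpperHyperboloid)
    (hH₂ : ∀ v ∈ UpperHyperboloid, (A₂ : Matrix (Fin 3) (Fin 3) ℝ).mulVec v ∈ UpperHyperboloid)
    (w₁ w₂ : Fin 3 → ℝ)
    (hw₁ : 0 < B3 w₁ w₁) (hw₂ : 0 < B3 w₂ w₂)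
    (hdisj : List.Pairwise Disjoint
      [closedHalfPlane (-w₁), closedHalfPlane ((A₁ : Matrix (Fin 3) (Fin 3) ℝ).mulVec w₁),
       closedHalfPlane (-w₂), closedHalfPlane ((A₂ : Matrix (Fin 3) (Fin 3) ℝ).mulVec w₂)]) :
    Function.Injective (FreeGroup.lift (![A₁, A₂] : Fin 2 → GL (Fin 3) ℝ)) ∧
    DiscreteTopology (Subgroup.closure ({A₁, A₂} : Set (GL (Fin 3) ℝ))) := by
  set Av : Fin 2 → GL (Fin 3) ℝ := ![A₁, A₂] with hAv
  set wv : Fin 2 → (Fin 3 → ℝ) := ![w₁, w₂] with hwv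
  have hB : ∀ i : Fin 2, ∀ v u : Fin 3 → ℝ,
      B3 ((Av i : Matrix (Fin 3) (Fin 3) ℝ).mulVec v)
        ((Av i : Matrix (Fin 3) (Fin 3) ℝ).mulVec u) = B3 v u := by
    intro i; fin_cases i
    · simpa [hAv] using hB₁
    · simpa [hAv] using hB₂
  have hH : ∀ i : Fin 2, ∀ v ∈ UpperHyperboloid,
      (Av i : Matrix (Fin 3) (Fin 3) ℝ).mulVec v ∈ UpperHyperboloid := by
    intro i; fin_cases i
    · simpa [hAv] using hH₁
    · simpa [hAv] using hH₂
  have hw : ∀ i : Fin 2, 0 < B3 (wv i) (wv i) := by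
    intro i; fin_cases i
    · simpa [hwv] using hw₁
    · simpa [hwv] using hw₂
  -- the four half-planes
  set D : Fin 2 × Bool → Set (Fin 3 → ℝ) := fun p =>
    closedHalfPlane (if p.2 then (Av p.1 : Matrix (Fin 3) (Fin 3) ℝ).mulVec (wv p.1)
      else -(wv p.1)) with hD
  -- disjointness
  have hdisj' : ∀ p q : Fin 2 × Bool, p ≠ q → Disjoint (D p) (D q) := by
    simp only [List.pairwise_cons, List.mem_cons, List.mem_singleton, List.not_mem_nil,
      or_false, List.Pairwise.nil] at hdisj
    obtain ⟨h0, h1, h2, -⟩ := hdisj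
    have d01 := h0 _ (Or.inl rfl)
    have d02 := h0 _ (Or.inr (Or.inl rfl))
    have d03 := h0 _ (Or.inr (Or.inr rfl))
    have d12 := h1 _ (Or.inl rfl)
    have d13 := h1 _ (Or.inr rfl)
    have d23 := h2 _ rfl
    intro p q hpq
    fin_cases p <;> fin_cases q <;>
      simp only [hD, hAv, hwv, Matrix.cons_val_zero, Matrix.cons_val_one, Matrix.head_cons,
        if_true, if_false, Bool.false_eq_true] <;>
      first
        | exact absurd rfl hpq
        | exact d01 | exact d01.symm
        | exact d02 | exact d02.symm
        | exact d03 | exact d03.symm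
        | exact d12 | exact d12.symm
        | exact d13 | exact d13.symm
        | exact d23 | exact d23.symm
  -- each half-plane is nonempty, closed, inside H
  have hDne : ∀ p, (D p).Nonempty := by
    rintro ⟨i, b⟩
    cases b
    · simpa [hD] using chp_nonempty _ (by rw [b3_neg_both]; exact hw i)
    · simpa [hD] using chp_nonempty _ (by rw [hB i]; exact hw i)
  have hDcl : ∀ p, IsClosed (D p) := fun p => isClosed_chp _
  have hDH : ∀ p, D p ⊆ UpperHyperboloid := fun p => chp_subset _
  -- a base point outside all four half-planes
  obtain ⟨x₀, hx₀H, hx₀D⟩ :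
      ∃ x₀ ∈ UpperHyperboloid, ∀ p : Fin 2 × Bool, x₀ ∉ D p := by
    by_contra hcon
    push_neg at hcon
    have hcover : UpperHyperboloid ⊆
        D (0, false) ∪ (D (0, true) ∪ D (1, false) ∪ D (1, true)) := by
      intro x hx
      obtain ⟨⟨i, b⟩, hp⟩ := hcon x hx
      fin_cases i <;> cases b
      · exact Or.inl hp
      · exact Or.inr (Or.inl (Or.inl hp))
      · exact Or.inr (Or.inl (Or.inr hp))
      · exact Or.inr (Or.inr hp)
    set C₁ := D (0, false) with hC₁
    set C₂ := D (0, true) ∪ D (1, false) ∪ D (1, true) with hC₂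
    have hC₂cl : IsClosed C₂ := ((hDcl _).union (hDcl _)).union (hDcl _)
    have hdisjC : ∀ x ∈ C₁, x ∉ C₂ := by
      intro x hx1 hx2
      rcases hx2 with (h | h) | h
      · exact (hdisj' (0, false) (0, true) (by simp)).le_bot ⟨hx1, h⟩
      · exact (hdisj' (0, false) (1, false) (by simp)).le_bot ⟨hx1, h⟩
      · exact (hdisj' (0, false) (1, true) (by simp)).le_bot ⟨hx1, h⟩
    have := H_preconnected C₂ᶜ C₁ᶜ hC₂cl.isOpen_compl (hDcl (0, false)).isOpen_compl
      (by intro x hx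
          rcases hcover hx with h | h
          · exact Or.inl (hdisjC x h)
          · exact Or.inr (fun hx1 => hdisjC x hx1 h))
      (by obtain ⟨x, hx⟩ := hDne (0, false)
          exact ⟨x, hDH _ hx, hdisjC x hx⟩)
      (by obtain ⟨x, hx⟩ := hDne (0, true)
          exact ⟨x, hDH _ hx, fun hx1 => hdisjC x hx1 (Or.inl (Or.inl hx))⟩)
    obtain ⟨x, hxH, hx2, hx1⟩ := this
    rcases hcover hxH with h | h
    · exact hx1 h
    · exact hx2 h
  -- inverses preserve H
  have hinvH : ∀ i : Fin 2, ∀ y ∈ UpperHyperboloid,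
      (((Av i)⁻¹ : GL (Fin 3) ℝ) : Matrix (Fin 3) (Fin 3) ℝ).mulVec y ∈ UpperHyperboloid :=
    fun i y hy => inv_preserves_H (Av i) (hB i) (hH i) y hy
  have hDt : ∀ i, D (i, true)
      = closedHalfPlane ((Av i : Matrix (Fin 3) (Fin 3) ℝ).mulVec (wv i)) := by
    intro i; simp [hD]
  have hDf : ∀ i, D (i, false) = closedHalfPlane (-(wv i)) := by
    intro i; simp [hD]
  -- the letter lemma
  have hletter : ∀ (i : Fin 2) (b : Bool), ∀ y ∈ UpperHyperboloid, y ∉ D (i, !b) →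
      ((cond b (Av i) (Av i)⁻¹ : GL (Fin 3) ℝ) : Matrix (Fin 3) (Fin 3) ℝ).mulVec y
        ∈ D (i, b) := by
    intro i b y hy hyD
    cases b
    · simp only [cond_false]
      rw [Bool.not_false] at hyD
      rw [hDt i] at hyD
      have h1 : B3 y ((Av i : Matrix (Fin 3) (Fin 3) ℝ).mulVec (wv i)) < 0 := by
        by_contra hcon
        push_neg at hcon
        exact hyD ⟨hy, hcon⟩
      set u := (((Av i)⁻¹ : GL (Fin 3) ℝ) : Matrix (Fin 3) (Fin 3) ℝ).mulVec y with hu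
      have h2 : B3 u (wv i) < 0 := by
        rw [← hB i u (wv i), hu, gl_inv_apply]; exact h1
      rw [hDf i]
      exact ⟨hinvH i y hy, by rw [b3_neg_right]; linarith⟩
    · simp only [cond_true]
      rw [Bool.not_true] at hyD
      rw [hDf i] at hyD
      have h1 : B3 y (-(wv i)) < 0 := by
        by_contra hcon
        push_neg at hcon
        exact hyD ⟨hy, hcon⟩
      have h1' : 0 < B3 y (wv i) := by rw [b3_neg_right] at h1; linarith
      rw [hDt i]
      exact ⟨hH i y hy, by rw [hB i]; linarith⟩
  -- products over words
  set P : List (Fin 2 × Bool) → GL (Fin 3) ℝ := fun L =>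
    (L.map fun x => cond x.2 (Av x.1) (Av x.1)⁻¹).prod with hP
  have hPlift : ∀ g : FreeGroup (Fin 2), P g.toWord = FreeGroup.lift Av g := by
    intro g
    conv_rhs => rw [← FreeGroup.mk_toWord (x := g)]
    rw [FreeGroup.lift_mk]
  have key : ∀ L : List (Fin 2 × Bool), Rd L → ∀ p rest, L = p :: rest →
      ((P L : GL (Fin 3) ℝ) : Matrix (Fin 3) (Fin 3) ℝ).mulVec x₀ ∈ D p := by
    intro L
    induction L with
    | nil => intro _ p rest h; simp at h
    | cons q tl ih =>
      intro hrd p rest heq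
      obtain ⟨rfl, rfl⟩ : q = p ∧ tl = rest := by
        injection heq with h1 h2; exact ⟨h1, h2⟩
      have hsplit : ((P (q :: tl) : GL (Fin 3) ℝ) : Matrix (Fin 3) (Fin 3) ℝ).mulVec x₀
          = ((cond q.2 (Av q.1) (Av q.1)⁻¹ : GL (Fin 3) ℝ) : Matrix (Fin 3) (Fin 3) ℝ).mulVec
            (((P tl : GL (Fin 3) ℝ) : Matrix (Fin 3) (Fin 3) ℝ).mulVec x₀) := by
        simp only [hP, List.map_cons, List.prod_cons, Units.val_mul, Matrix.mulVec_mulVec]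
      rw [hsplit]
      obtain ⟨i, b⟩ := q
      cases tl with
      | nil =>
        have hy : ((P [] : GL (Fin 3) ℝ) : Matrix (Fin 3) (Fin 3) ℝ).mulVec x₀ = x₀ := by
          simp [hP, Matrix.one_mulVec]
        rw [hy]
        exact hletter i b x₀ hx₀H (hx₀D _)
      | cons q' tl' =>
        have hy := ih (rd_tail hrd) q' tl' rfl
        refine hletter i b _ (hDH _ hy) ?_
        intro hmem
        have hne : ((i, !b) : Fin 2 × Bool) ≠ q' := by
          intro he
          exact rd_head hrd (by rw [← he]; exact ⟨rfl, rfl⟩)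
        exact (hdisj' _ _ hne).le_bot ⟨hmem, hy⟩
  have main1 : ∀ g : FreeGroup (Fin 2), g ≠ 1 →
      ∃ p, ((FreeGroup.lift Av g : GL (Fin 3) ℝ) : Matrix (Fin 3) (Fin 3) ℝ).mulVec x₀ ∈ D p := by
    intro g hg
    have hnil : g.toWord ≠ [] := fun h => hg (FreeGroup.toWord_eq_nil_iff.mp h)
    obtain ⟨p, rest, hrw⟩ : ∃ p rest, g.toWord = p :: rest := by
      cases hL : g.toWord with
      | nil => exact absurd hL hnil
      | cons a l => exact ⟨a, l, rfl⟩
    refine ⟨p, ?_⟩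
    rw [← hPlift g]
    exact key g.toWord (rd_toWord g) p rest hrw
  constructor
  · refine (injective_iff_map_eq_one _).mpr ?_
    intro g hg
    by_contra hne
    obtain ⟨p, hp⟩ := main1 g hne
    rw [hg] at hp
    simp only [Units.val_one, Matrix.one_mulVec] at hp
    exact hx₀D p hp
  · rw [discreteTopology_iff_isOpen_singleton_one]
    have hXcl : IsClosed (⋃ p, D p) := isClosed_iUnion_of_finite hDcl
    have hcontψ : Continuous fun M : GL (Fin 3) ℝ =>
        (M : Matrix (Fin 3) (Fin 3) ℝ).mulVec x₀ := by
      have h1 : Continuous fun M : GL (Fin 3) ℝ => (M : Matrix (Fin 3) (Fin 3) ℝ) :=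
        Units.continuous_val
      have h2 : Continuous fun m : Matrix (Fin 3) (Fin 3) ℝ => m.mulVec x₀ := by
        unfold Matrix.mulVec dotProduct; fun_prop
      exact h2.comp h1
    have hUopen : IsOpen {M : GL (Fin 3) ℝ |
        (M : Matrix (Fin 3) (Fin 3) ℝ).mulVec x₀ ∈ (⋃ p, D p)ᶜ} :=
      hXcl.isOpen_compl.preimage hcontψ
    have hrange : (FreeGroup.lift Av).range
        = Subgroup.closure ({A₁, A₂} : Set (GL (Fin 3) ℝ)) := by
      rw [FreeGroup.range_lift_eq_closure]
      congr 1
      ext x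
      simp [hAv, Fin.exists_fin_two, eq_comm, or_comm]
    have hset : ({1} : Set (Subgroup.closure ({A₁, A₂} : Set (GL (Fin 3) ℝ))))
        = (Subtype.val) ⁻¹' {M : GL (Fin 3) ℝ |
            (M : Matrix (Fin 3) (Fin 3) ℝ).mulVec x₀ ∈ (⋃ p, D p)ᶜ} := by
      ext γ
      simp only [Set.mem_singleton_iff, Set.mem_preimage, Set.mem_setOf_eq, Set.mem_compl_iff]
      constructor
      · rintro rfl
        simp only [OneMemClass.coe_one, Units.val_one, Matrix.one_mulVec]
        simp only [Set.mem_iUnion, not_exists]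
        exact hx₀D
      · intro hγ
        by_contra hne
        have hmem : (γ : GL (Fin 3) ℝ) ∈ (FreeGroup.lift Av).range := by
          rw [hrange]; exact γ.2
        obtain ⟨g, hg⟩ := hmem
        have hg1 : g ≠ 1 := by
          rintro rfl
          rw [map_one] at hg
          exact hne (OneMemClass.coe_eq_one.mp hg.symm)
        obtain ⟨p, hp⟩ := main1 g hg1
        rw [hg] at hp
        exact hγ (Set.mem_iUnion.2 ⟨p, hp⟩)
    rw [hset]
    exact hUopen.preimage continuous_subtype_val
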